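/- Let λ be a partition with at most n parts, set α_i = λ_i − i + 1, and let Y = y_1+⋯+y_m be an auxiliary alphabet of independent variables. Then S_λ[Y+X]·Δ(X) = det( S_{α_i+n−1}[Y + x_{n+1−j}] )_{1≤i,j≤n}, where Δ(X) = ∏_{1≤i<j≤n}(x_j − x_i) is the Vandermonde determinant. -/

import Mathlib

open MvPolynomial Finset

set_option synthInstance.maxHeartbeats 1000000
set_option maxHeartbeats 1000000

noncomputable section

/-- The base field `ℚ(q,t)`. -/
abbrev Fqt : Type := FractionRing (MvPolynomial (Fin 2) ℚ)

/-- The element `q` of `ℚ(q,t)`. -/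
def qF : Fqt := algebraMap (MvPolynomial (Fin 2) ℚ) Fqt (X 0)

/-- The element `t` of `ℚ(q,t)`. -/
def tF : Fqt := algebraMap (MvPolynomial (Fin 2) ℚ) Fqt (X 1)

lemma qF_ne_zero : qF ≠ 0 := by
  have h : Function.Injective (algebraMap (MvPolynomial (Fin 2) ℚ) Fqt) :=
    IsFractionRing.injective _ _
  intro hq
  exact MvPolynomial.X_ne_zero (R := ℚ) (0 : Fin 2) (h (by rw [map_zero]; exact hq))

/-- Polynomials in `N` variables `x_1, …, x_N` over `ℚ(q,t)`. -/
abbrev Rg (N : ℕ) := MvPolynomial (Fin N) Fqt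

/-- The field of rational functions in `x_1, …, x_N` over `ℚ(q,t)`. -/
abbrev Kg (N : ℕ) := FractionRing (Rg N)

/-- The variable `x_i` (1-based indexing), as an element of `Kg N`. -/
def xv (N i : ℕ) : Kg N :=
  if h : 1 ≤ i ∧ i ≤ N then algebraMap (Rg N) (Kg N) (X ⟨i - 1, by omega⟩) else 0

/-- A scalar from `ℚ(q,t)` viewed inside `Kg N`. -/
def cK (N : ℕ) (c : Fqt) : Kg N := algebraMap (Rg N) (Kg N) (C c)

/-- The element `q` of `Kg N`. -/
def qK (N : ℕ) : Kg N := cK N qF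

/-- The element `t` of `Kg N`. -/
def tK (N : ℕ) : Kg N := cK N tF

/-- The field automorphism of `Kg N` exchanging two variables. -/
def swapK (N : ℕ) (a b : Fin N) : Kg N ≃+* Kg N :=
  IsFractionRing.ringEquivOfRingEquiv
    (AlgEquiv.toRingEquiv (renameEquiv Fqt (Equiv.swap a b)))

/-- `swapv N a b` exchanges the variables `x_a` and `x_b` (1-based). -/
def swapv (N a b : ℕ) (f : Kg N) : Kg N :=
  if h : 1 ≤ a ∧ a ≤ N ∧ 1 ≤ b ∧ b ≤ N then
    swapK N ⟨a - 1, by omega⟩ ⟨b - 1, by omega⟩ f else f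

/-- The divided difference `∂_i` (1-based): `∂_i f = (f - σ_i f)/(x_i - x_{i+1})`. -/
def dd (N i : ℕ) (f : Kg N) : Kg N :=
  if 1 ≤ i ∧ i + 1 ≤ N then (f - swapv N i (i + 1) f) / (xv N i - xv N (i + 1)) else 0

/-- The algebra endomorphism of `Rg N` scaling the variable `l` by the scalar `c`. -/
def scaleHom (N : ℕ) (l : Fin N) (c : Fqt) : Rg N →ₐ[Fqt] Rg N :=
  aeval (fun i => if i = l then C c * X i else X i)

lemma scaleHom_comp (N : ℕ) (l : Fin N) (c : Fqt) (hc : c ≠ 0) :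
    (scaleHom N l c).comp (scaleHom N l c⁻¹) = AlgHom.id Fqt (Rg N) := by
  apply algHom_ext
  intro i
  by_cases h : i = l
  · subst h
    simp only [scaleHom, AlgHom.coe_comp, Function.comp_apply, aeval_X, if_pos,
      AlgHom.coe_id, id_eq, map_mul, aeval_C, algebraMap_eq, if_true]
    rw [← mul_assoc, ← C_mul, inv_mul_cancel₀ hc, C_1, one_mul]
  · simp [scaleHom, h]

/-- The algebra automorphism of `Rg N` scaling the variable `l` by a nonzero scalar `c`. -/
def scaleEquiv (N : ℕ) (l : Fin N) (c : Fqt) (hc : c ≠ 0) : Rg N ≃ₐ[Fqt] Rg N :=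
  AlgEquiv.ofAlgHom (scaleHom N l c) (scaleHom N l c⁻¹)
    (scaleHom_comp N l c hc)
    (by simpa [inv_inv] using scaleHom_comp N l c⁻¹ (inv_ne_zero hc))

/-- The field automorphism `Θ_l` of `Kg N`, substituting `x_l ↦ q·x_l`. -/
def thetaK (N : ℕ) (l : Fin N) : Kg N ≃+* Kg N :=
  IsFractionRing.ringEquivOfRingEquiv
    (AlgEquiv.toRingEquiv (scaleEquiv N l qF qF_ne_zero))

/-- `Θ_l` with 1-based indexing: substitutes `x_l ↦ q x_l`. -/
def thetav (N l : ℕ) (f : Kg N) : Kg N :=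
  if h : 1 ≤ l ∧ l ≤ N then thetaK N ⟨l - 1, by omega⟩ f else f

/-- The list (alphabet) `x_a, x_{a+1}, …, x_b`. -/
def XL (N a b : ℕ) : List (Kg N) := (List.range' a (b + 1 - a)).map (xv N)

/-- Scaling an alphabet by a constant. -/
def scaleL {A : Type*} [Mul A] (c : A) (L : List A) : List A := L.map (c * ·)

/-- Complete homogeneous function `h_j` of a (listed) alphabet. -/
def hfun {A : Type*} [CommRing A] : List A → ℕ → A
  | _, 0 => 1
  | [], _ + 1 => 0
  | a :: l, j + 1 => hfun l (j + 1) + a * hfun (a :: l) j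
  termination_by l j => (l.length, j)

/-- Elementary symmetric function `e_j` of a (listed) alphabet. -/
def efun {A : Type*} [CommRing A] : List A → ℕ → A
  | _, 0 => 1
  | [], _ + 1 => 0
  | a :: l, j + 1 => efun l (j + 1) + a * efun l j

/-- `S_j[P − M]`, the complete function of degree `j ∈ ℤ` of the difference of
two alphabets: `S_j[P−M] = Σ_{a+b=j} h_a[P]·(−1)^b e_b[M]`, and `0` for `j < 0`. -/
def SJ {A : Type*} [CommRing A] (P M : List A) (j : ℤ) : A :=
  if 0 ≤ j then
    ∑ p ∈ Finset.range (j.toNat + 1), hfun P (j.toNat - p) * (-1 : A) ^ p * efun M p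
  else 0

/-- `e_m[L]` with integer index (`0` for `m < 0`). -/
def EJ {A : Type*} [CommRing A] (L : List A) (m : ℤ) : A :=
  if 0 ≤ m then efun L m.toNat else 0

/-- The Jacobi–Trudi determinant: the Schur function `S_λ[P−M]` for a partition
given as a vector `lam : Fin n → ℕ`. -/
def schurJT {A : Type*} [CommRing A] (n : ℕ) (lam : Fin n → ℕ) (P M : List A) : A :=
  (Matrix.of fun i j : Fin n => SJ P M ((lam i : ℤ) - (i : ℕ) + (j : ℕ))).det

/-- Skew Schur function `S_{α/η}[P−M]` for integer vectors `α, η` of length `k`. -/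
def schurVec {A : Type*} [CommRing A] (k : ℕ) (α η : Fin k → ℤ) (P M : List A) : A :=
  (Matrix.of fun i j : Fin k => SJ P M (α i - (i : ℕ) + (j : ℕ) - η j)).det

/-- Power sum `p_i = x_1^i + ⋯ + x_N^i`. -/
def pK (N i : ℕ) : Kg N := ∑ l ∈ Finset.Icc 1 N, xv N l ^ i

/-- The modified complete functions `g_j = S_j[X(t−1)/(q−1)]`, defined through the
recurrence `j·g_j = Σ_{i=1}^{j} ((t^i−1)/(q^i−1)) p_i g_{j−i}`, `g_0 = 1`. -/
def gK (N : ℕ) : ℕ → Kg N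
  | 0 => 1
  | j + 1 =>
    ((j : Kg N) + 1)⁻¹ *
      ∑ i ∈ (Finset.Icc 1 (j + 1)).attach,
        ((tK N ^ (i : ℕ) - 1) / (qK N ^ (i : ℕ) - 1)) * pK N (i : ℕ) * gK N (j + 1 - (i : ℕ))
  termination_by j => j
  decreasing_by
    have := Finset.mem_Icc.mp i.2
    omega

/-- `g_m` with integer index (`0` for `m < 0`). -/
def gz (N : ℕ) (m : ℤ) : Kg N := if 0 ≤ m then gK N m.toNat else 0

/-- The modified Schur function `S_λ[X^{tq}]` as a `k×k` Jacobi–Trudi determinant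
in the `g_j`'s, for a partition `lam` with at most `k` parts. -/
def schurG (N k : ℕ) (lam : Fin k → ℕ) : Kg N :=
  (Matrix.of fun i j : Fin k => gz N ((lam i : ℤ) - (i : ℕ) + (j : ℕ))).det

/-- `∂_b ∘ ⋯ ∘ ∂_{a+1} ∘ ∂_a` (i.e. `∂_a` applied first). -/
def ddUp (N a b : ℕ) (f : Kg N) : Kg N :=
  (List.range' a (b + 1 - a)).foldl (fun g i => dd N i g) f

/-- `∂_a ∘ ∂_{a+1} ∘ ⋯ ∘ ∂_b` (i.e. `∂_b` applied first). -/
def ddDown (N a b : ℕ) (f : Kg N) : Kg N :=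
  (List.range' a (b + 1 - a)).reverse.foldl (fun g i => dd N i g) f

/-- `∂_{(k|n−k)} = (∂_{n−k}⋯∂_1)(∂_{n−k+1}⋯∂_2)⋯(∂_{n−1}⋯∂_k)`. -/
def ddSyl (N n k : ℕ) (f : Kg N) : Kg N :=
  (List.range k).foldl (fun g j => ddUp N (k - j) (n - 1 - j) g) f

/-- `∂_{ω(k)} = (∂_{k−1})(∂_{k−2}∂_{k−1})⋯(∂_1⋯∂_{k−1})`, the divided difference
of the longest permutation of `S_k`. -/
def ddOmega (N k : ℕ) (f : Kg N) : Kg N :=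
  (List.range (k - 1)).foldl (fun g j => ddDown N (j + 1) (k - 1) g) f

/-- The resultant `R(P,Q) = Π_{a∈P, b∈Q} (a−b)` of two (listed) alphabets. -/
def resL {A : Type*} [CommRing A] (P Q : List A) : A :=
  (P.map (fun a => (Q.map (fun b => a - b)).prod)).prod

/-- `χ^{(k)}_{(1|n−k)} f = ∂_{n−1}⋯∂_k ( R(x_k, X_k^c/t) · f )`. -/
def chi1 (N n k : ℕ) (f : Kg N) : Kg N :=
  ddUp N k (n - 1) (resL [xv N k] (scaleL (tK N)⁻¹ (XL N (k + 1) n)) * f)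

/-- `χ_{(k|n−k)} f = ∂_{(k|n−k)} ( R(X_k, X_k^c/t) · f )`. -/
def chiSyl (N n k : ℕ) (f : Kg N) : Kg N :=
  ddSyl N n k (resL (XL N 1 k) (scaleL (tK N)⁻¹ (XL N (k + 1) n)) * f)

/-- `χ_{ω(k)} f = ∂_{ω(k)} ( Π_{1≤i<j≤k} (x_i − x_j/t) · f )`. -/
def chiOmega (N k : ℕ) (f : Kg N) : Kg N :=
  ddOmega N k
    ((∏ i ∈ Finset.Icc 1 k, ∏ j ∈ Finset.Ioc i k, (xv N i - (tK N)⁻¹ * xv N j)) * f)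

/-- `Θ_{i_k}⋯Θ_{i_1}` for a set `I = {i_1 < ⋯ < i_k}` (smallest index applied first). -/
def thetaSet (N : ℕ) (I : Finset ℕ) (f : Kg N) : Kg N :=
  (I.sort (· ≤ ·)).foldl (fun g l => thetav N l g) f

/-- The Macdonald operator `M_l` in the variables `{x_i : i ∈ I}`:
`M_l^{(I)} = t^{l(l−1)/2} Σ_{J⊆I, |J|=l} R(tX_J, X_I∖X_J) Θ_J`. -/
def MacOp (N : ℕ) (I : Finset ℕ) (l : ℕ) (f : Kg N) : Kg N :=
  tK N ^ (l * (l - 1) / 2) *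
    ∑ J ∈ I.powersetCard l,
      (∏ a ∈ J, ∏ b ∈ I \ J, (tK N * xv N a - xv N b)) * thetaSet N J f

/-- The creation operator
`B_k^{(n)} = Σ_{|I|=k} Σ_{l=0}^{k} (−t)^l x^I (R(X_I,X_I^c/t)/R(X_I,X_I^c)) M_l^{(I)}`. -/
def BOp (N n k : ℕ) (f : Kg N) : Kg N :=
  ∑ I ∈ (Finset.Icc 1 n).powersetCard k, ∑ l ∈ Finset.range (k + 1),
    (-(tK N)) ^ l * (∏ i ∈ I, xv N i) *
      ((∏ a ∈ I, ∏ b ∈ Finset.Icc 1 n \ I, (xv N a - (tK N)⁻¹ * xv N b)) /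
        (∏ a ∈ I, ∏ b ∈ Finset.Icc 1 n \ I, (xv N a - xv N b))) *
      MacOp N I l f

/-- `ε(μ,α)`: the sign of the unique permutation `σ` with
`α_i = μ_{σ(i)} − σ(i) + i` for all `i`, and `0` if no such `σ` exists. -/
def eps (n : ℕ) (μ α : Fin n → ℕ) : ℤ :=
  if h : ∃ σ : Equiv.Perm (Fin n),
      ∀ i, (α i : ℤ) = (μ (σ i) : ℤ) - ((σ i : ℕ) : ℤ) + (i : ℕ) then
    Equiv.Perm.sign h.choose
  else 0

/-- `[|α|] = q^{α_1} t^{n−1} + q^{α_2} t^{n−2} + ⋯ + q^{α_n}`. -/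
def anorm (N n : ℕ) (α : Fin n → ℕ) : Kg N :=
  ∑ i : Fin n, qK N ^ (α i) * tK N ^ (n - 1 - (i : ℕ))

/-- `[|α|]_{t,q}`, i.e. `anorm` with `q` and `t` interchanged. -/
def anormT (N n : ℕ) (α : Fin n → ℕ) : Kg N :=
  ∑ i : Fin n, tK N ^ (α i) * qK N ^ (n - 1 - (i : ℕ))

/-- The finite set of all distinct rearrangements of a vector `ν ∈ ℕ^n`. -/
def permsOf (n : ℕ) (ν : Fin n → ℕ) : Finset (Fin n → ℕ) :=
  Finset.image (fun σ : Equiv.Perm (Fin n) => ν ∘ σ) Finset.univ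

/-- `[λ]_{μν}(q,t) = Σ_α ε(μ,α)·([|λ|] − [|α|])`, `α` ranging over distinct
rearrangements of `ν`. -/
def brackQT (N n : ℕ) (lam μ ν : Fin n → ℕ) : Kg N :=
  ∑ α ∈ permsOf n ν, (eps n μ α : Kg N) * (anorm N n lam - anorm N n α)

/-- `[λ]_{μν}(t,q)`: the same with `q` and `t` interchanged. -/
def brackTQ (N n : ℕ) (lam μ ν : Fin n → ℕ) : Kg N :=
  ∑ α ∈ permsOf n ν, (eps n μ α : Kg N) * (anormT N n lam - anormT N n α)

/-- The conjugate of a partition, as a vector of prescribed length `b`. -/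
def conjTo (a b : ℕ) (lam : Fin a → ℕ) : Fin b → ℕ :=
  fun j => (Finset.univ.filter (fun i : Fin a => (j : ℕ) + 1 ≤ lam i)).card

/-- Dominance order: `dominatedBy n a b` means `a ≤ b`, i.e.
`a_1 + ⋯ + a_i ≤ b_1 + ⋯ + b_i` for all `i`. -/
def dominatedBy (n : ℕ) (a b : Fin n → ℕ) : Prop :=
  ∀ p : Fin n, ∑ i ∈ Finset.Iic p, a i ≤ ∑ i ∈ Finset.Iic p, b i

/-- The Schur polynomial `S_μ[X_n]` inside `Kg N` (Jacobi–Trudi determinant in the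
complete functions of `x_1, …, x_n`). -/
def schurX (N n : ℕ) (μ : Fin n → ℕ) : Kg N := schurJT n μ (XL N 1 n) []

/-- The monomial symmetric polynomial `m_μ[X_n]` inside `Kg N`. -/
def msym (N n : ℕ) (μ : Fin n → ℕ) : Kg N :=
  ∑ α ∈ permsOf n μ, ∏ i : Fin n, xv N ((i : ℕ) + 1) ^ α i

/-- `t`-factorial `k_t! = t^{−k(k−1)/2} (t)_k/(1−t)^k`. -/
def ktfact (N k : ℕ) : Kg N :=
  tK N ^ (-((k * (k - 1) / 2 : ℕ) : ℤ)) *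
    (∏ i ∈ Finset.Icc 1 k, (1 - tK N ^ i)) / (1 - tK N) ^ k

/-- `Ω_k = σ_1 σ_2 ⋯ σ_{k−1} Θ_k`. -/
def omegaOp (N k : ℕ) (f : Kg N) : Kg N :=
  (List.range (k - 1)).foldl (fun g j => swapv N (k - 1 - j) (k - j) g) (thetav N k f)

/-- `(1−tΩ_k)(1−t²Ω_k)⋯(1−t^kΩ_k)`, composed in the order written
(the factor `(1−t^kΩ_k)` applied first). -/
def creationProd (N k : ℕ) (f : Kg N) : Kg N :=
  (List.range k).foldl (fun g j => g - tK N ^ (k - j) * omegaOp N k g) f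

/-- The exponent vector `(0,…,0,α_1,…,α_n) ∈ ℕ^{2n}` read at (1-based) position `i`. -/
def abar (n : ℕ) (α : Fin n → ℕ) (i : ℕ) : ℕ :=
  if h : n + 1 ≤ i ∧ i ≤ 2 * n then α ⟨i - n - 1, by omega⟩ else 0

/-- `x̄^{ρ−(0,…,0,α_1,…,α_n)} = Π_{i=1}^{2n} (−x_i)^{(i−1) − (0,…,0,α)_i}`. -/
def xbar (n : ℕ) (α : Fin n → ℕ) : Kg (2 * n) :=
  ∏ i ∈ Finset.Icc 1 (2 * n), (-(xv (2 * n) i)) ^ (i - 1 - abar n α i)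

/-- `⟨f⟩_{κν} = Σ_α ∂_ω( x̄^{ρ−(0,…,0,α)} f )·([|κ|]_{t,q} − [|α|]_{t,q})`,
`α` over distinct rearrangements of `ν`. -/
def brackF (n : ℕ) (f : Kg (2 * n)) (κ ν : Fin n → ℕ) : Kg (2 * n) :=
  ∑ α ∈ permsOf n ν,
    ddOmega (2 * n) (2 * n) (xbar n α * f) * (anormT (2 * n) n κ - anormT (2 * n) n α)

/-- The creation operator in `k` variables, `B_k^{(k)} = Σ_{l=0}^k (−t)^l x_1⋯x_k M_l^{(k)}`. -/
def BOpSelf (N k : ℕ) (f : Kg N) : Kg N :=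
  ∑ l ∈ Finset.range (k + 1),
    (-(tK N)) ^ l * (∏ i ∈ Finset.Icc 1 k, xv N i) * MacOp N (Finset.Icc 1 k) l f


section Generic

variable {A : Type*} [CommRing A]

def hzf (L : List A) (z : ℤ) : A := if 0 ≤ z then hfun L z.toNat else 0

def ezf (L : List A) (z : ℤ) : A := if 0 ≤ z then efun L z.toNat else 0

lemma hfun_zero (L : List A) : hfun L 0 = 1 := by cases L <;> simp [hfun]

lemma efun_zero (L : List A) : efun L 0 = 1 := by cases L <;> simp [efun]

lemma hzf_neg (L : List A) {z : ℤ} (h : z < 0) : hzf L z = 0 := by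
  simp [hzf, not_le.2 h]

lemma ezf_neg (L : List A) {z : ℤ} (h : z < 0) : ezf L z = 0 := by
  simp [ezf, not_le.2 h]

lemma hzf_zero (L : List A) : hzf L 0 = 1 := by simp [hzf, hfun_zero]

lemma ezf_zero (L : List A) : ezf L 0 = 1 := by simp [ezf, efun_zero]

lemma hzf_nil (z : ℤ) : hzf ([] : List A) z = if z = 0 then 1 else 0 := by
  rcases lt_trichotomy z 0 with h | h | h
  · simp [hzf_neg, h, h.ne]
  · simp [h, hzf_zero]
  · have : z.toNat ≠ 0 := by omega
    obtain ⟨k, hk⟩ := Nat.exists_eq_succ_of_ne_zero this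
    simp only [hzf, if_pos h.le, hk]
    rw [if_neg (by omega : ¬ z = 0)]
    simp [hfun]

lemma hzf_cons (a : A) (l : List A) (z : ℤ) :
    hzf (a :: l) z = hzf l z + a * hzf (a :: l) (z - 1) := by
  rcases lt_trichotomy z 0 with h | h | h
  · rw [hzf_neg _ h, hzf_neg _ h, hzf_neg _ (by omega)]; ring
  · subst h
    rw [hzf_zero, hzf_zero, hzf_neg _ (by norm_num : (0:ℤ) - 1 < 0), mul_zero, add_zero]
  · have h0 : (0:ℤ) ≤ z := h.le
    have h1 : (0:ℤ) ≤ z - 1 := by omega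
    obtain ⟨k, hk⟩ := Nat.exists_eq_succ_of_ne_zero (show z.toNat ≠ 0 by omega)
    have hk' : (z - 1).toNat = k := by omega
    simp only [hzf, if_pos h0, if_pos h1, hk, hk', hfun]

lemma ezf_cons (a : A) (l : List A) (z : ℤ) :
    ezf (a :: l) z = ezf l z + a * ezf l (z - 1) := by
  rcases lt_trichotomy z 0 with h | h | h
  · rw [ezf_neg _ h, ezf_neg _ h, ezf_neg _ (by omega)]; ring
  · subst h
    rw [ezf_zero, ezf_zero, ezf_neg _ (by norm_num : (0:ℤ) - 1 < 0), mul_zero, add_zero]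
  · have h0 : (0:ℤ) ≤ z := h.le
    have h1 : (0:ℤ) ≤ z - 1 := by omega
    obtain ⟨k, hk⟩ := Nat.exists_eq_succ_of_ne_zero (show z.toNat ≠ 0 by omega)
    have hk' : (z - 1).toNat = k := by omega
    simp only [ezf, if_pos h0, if_pos h1, hk, hk', efun]

lemma ezf_nil (z : ℤ) : ezf ([] : List A) z = if z = 0 then 1 else 0 := by
  rcases lt_trichotomy z 0 with h | h | h
  · simp [ezf_neg, h, h.ne]
  · simp [h, ezf_zero]
  · have : z.toNat ≠ 0 := by omega
    obtain ⟨k, hk⟩ := Nat.exists_eq_succ_of_ne_zero this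
    simp only [ezf, if_pos h.le, hk]
    rw [if_neg (by omega : ¬ z = 0)]
    simp [efun]

lemma ezf_of_length_lt (L : List A) {z : ℤ} (h : (L.length : ℤ) < z) : ezf L z = 0 := by
  induction L generalizing z with
  | nil => simp only [List.length_nil, Nat.cast_zero] at h; rw [ezf_nil, if_neg (by omega)]
  | cons a l ih =>
      rw [ezf_cons, ih (by simp at h ⊢; omega), ih (by simp at h ⊢; omega)]
      ring

lemma hzf_cons_sum (a : A) (l : List A) {z : ℤ} {R : ℕ} (h : z < R) :
    hzf (a :: l) z = ∑ q ∈ Finset.range R, a ^ q * hzf l (z - q) := by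
  induction R generalizing z with
  | zero => rw [hzf_neg _ (by omega)]; simp
  | succ R ih =>
      rcases lt_or_ge z 0 with hz | hz
      · rw [hzf_neg _ hz]
        refine (Finset.sum_eq_zero fun q _ => ?_).symm
        rw [hzf_neg _ (by omega), mul_zero]
      · rw [hzf_cons, ih (by omega), Finset.sum_range_succ' (fun q => a ^ q * hzf l (z - q)) R,
          Finset.mul_sum]
        simp only [pow_zero, one_mul, Int.ofNat_zero, sub_zero]
        rw [add_comm]
        congr 1
        refine Finset.sum_congr rfl fun q _ => ?_
        have : z - 1 - (q : ℤ) = z - ((q : ℕ) + 1 : ℕ) := by push_cast; ring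
        rw [this, pow_succ]
        ring

lemma hzf_append (P Q : List A) {z : ℤ} {R : ℕ} (h : z < R) :
    hzf (P ++ Q) z = ∑ p ∈ Finset.range R, hzf P (z - p) * hzf Q p := by
  induction P generalizing z with
  | nil =>
      simp only [List.nil_append]
      rcases lt_or_ge z 0 with hz | hz
      · rw [hzf_neg _ hz]
        refine (Finset.sum_eq_zero fun q _ => ?_).symm
        rw [hzf_nil, if_neg (by omega), zero_mul]
      · rw [Finset.sum_eq_single z.toNat]
        · rw [hzf_nil, if_pos (by omega), one_mul]
          congr 1; omega
        · intro q _ hq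
          rw [hzf_nil, if_neg (by omega), zero_mul]
        · intro hq
          exact absurd (Finset.mem_range.2 (by omega)) hq
  | cons a P' ih =>
      rw [List.cons_append, hzf_cons_sum a (P' ++ Q) h]
      have : ∀ q ∈ Finset.range R, a ^ q * hzf (P' ++ Q) (z - q)
          = ∑ p ∈ Finset.range R, a ^ q * (hzf P' (z - q - p) * hzf Q p) := by
        intro q _
        rw [ih (by omega), Finset.mul_sum]
      rw [Finset.sum_congr rfl this, Finset.sum_comm]
      refine Finset.sum_congr rfl fun p _ => ?_
      rw [hzf_cons_sum a P' (show z - (p:ℤ) < R by omega), Finset.sum_mul]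
      refine Finset.sum_congr rfl fun q _ => ?_
      have : z - q - p = z - p - q := by ring
      rw [this]; ring

end Generic

section Generic2

variable {A : Type*} [CommRing A]

lemma hzf_swap (a b : A) (l : List A) (z : ℤ) :
    hzf (a :: b :: l) z = hzf (b :: a :: l) z := by
  set R : ℕ := z.toNat + 1 with hR
  have hzR : z < R := by omega
  rw [hzf_cons_sum a (b :: l) hzR, hzf_cons_sum b (a :: l) hzR]
  have e1 : ∀ q ∈ Finset.range R, a ^ q * hzf (b :: l) (z - q)
      = ∑ r ∈ Finset.range R, a ^ q * (b ^ r * hzf l (z - q - r)) := by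
    intro q _
    rw [hzf_cons_sum b l (show z - (q:ℤ) < R by omega), Finset.mul_sum]
  have e2 : ∀ q ∈ Finset.range R, b ^ q * hzf (a :: l) (z - q)
      = ∑ r ∈ Finset.range R, b ^ q * (a ^ r * hzf l (z - q - r)) := by
    intro q _
    rw [hzf_cons_sum a l (show z - (q:ℤ) < R by omega), Finset.mul_sum]
  rw [Finset.sum_congr rfl e1, Finset.sum_congr rfl e2, Finset.sum_comm]
  refine Finset.sum_congr rfl fun r _ => Finset.sum_congr rfl fun q _ => ?_
  have : z - q - r = z - r - q := by ring
  rw [this]; ring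

lemma hzf_perm {L L' : List A} (h : L.Perm L') (z : ℤ) : hzf L z = hzf L' z := by
  induction h generalizing z with
  | nil => rfl
  | cons x _ ih =>
      rename_i l₁ l₂ _
      set R : ℕ := z.toNat + 1 with hR
      have hzR : z < R := by omega
      rw [hzf_cons_sum x l₁ hzR, hzf_cons_sum x l₂ hzR]
      exact Finset.sum_congr rfl fun q _ => by rw [ih]
  | swap x y l => exact hzf_swap y x l z
  | trans _ _ ih₁ ih₂ => rw [ih₁, ih₂]

lemma ezf_perm {L L' : List A} (h : L.Perm L') (z : ℤ) : ezf L z = ezf L' z := by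
  induction h generalizing z with
  | nil => rfl
  | cons x _ ih =>
      rw [ezf_cons, ezf_cons, ih, ih]
  | swap x y l =>
      rw [ezf_cons, ezf_cons, ezf_cons, ezf_cons, ezf_cons, ezf_cons]
      have : z - 1 - 1 = z - 2 := by ring
      ring
  | trans _ _ ih₁ ih₂ => rw [ih₁, ih₂]

lemma cancel_sum (L : List A) {R : ℕ} (hR : L.length < R) (z : ℤ) :
    ∑ p ∈ Finset.range R, (-1 : A) ^ p * ezf L p * hzf L (z - p) = hzf ([] : List A) z := by
  induction L generalizing z R with
  | nil =>
      rcases lt_or_ge z 0 with hz | hz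
      · rw [hzf_nil, if_neg (by omega)]
        refine Finset.sum_eq_zero fun p _ => ?_
        rw [hzf_neg _ (by omega), mul_zero]
      · rw [Finset.sum_eq_single 0]
        · simp [ezf_zero]
        · intro p _ hp
          rw [ezf_nil, if_neg (by omega : ¬ ((p:ℤ) = 0))]
          ring
        · intro hp
          exact absurd (Finset.mem_range.2 (by omega)) hp
  | cons a l ih =>
      have hl : l.length < R := by simp at hR; omega
      obtain ⟨R', rfl⟩ : ∃ R', R = R' + 1 := ⟨R - 1, by omega⟩
      have hl' : l.length < R' := by simp at hR; omega
      -- recurrence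
      have hrec : ∀ w : ℤ,
          ∑ p ∈ Finset.range (R' + 1), (-1 : A) ^ p * ezf (a :: l) p * hzf (a :: l) (w - p)
          = hzf ([] : List A) w - a * hzf ([] : List A) (w - 1) +
            a * ∑ p ∈ Finset.range (R' + 1),
              (-1 : A) ^ p * ezf (a :: l) p * hzf (a :: l) (w - 1 - p) := by
        intro w
        have expand : ∀ p ∈ Finset.range (R' + 1),
            (-1 : A) ^ p * ezf (a :: l) p * hzf (a :: l) (w - p)
            = (-1 : A) ^ p * ezf l p * hzf l (w - p)
              + (-1 : A) ^ p * (a * ezf l ((p : ℤ) - 1)) * hzf l (w - p)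
              + a * ((-1 : A) ^ p * ezf (a :: l) p * hzf (a :: l) (w - 1 - p)) := by
          intro p _
          rw [ezf_cons a l (p : ℤ)]
          nth_rewrite 1 [hzf_cons a l (w - p)]
          have : w - (p:ℤ) - 1 = w - 1 - p := by ring
          rw [this]
          ring
        rw [Finset.sum_congr rfl expand, Finset.sum_add_distrib, Finset.sum_add_distrib,
          ih hl, ← Finset.mul_sum]
        congr 1
        -- middle term
        rw [Finset.sum_range_succ' (fun p => (-1 : A) ^ p * (a * ezf l ((p:ℤ) - 1)) * hzf l (w - p)) R']
        have h0 : ((0:ℕ):ℤ) - 1 = -1 := by norm_num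
        rw [h0, ezf_neg l (by norm_num : (-1 : ℤ) < 0)]
        have : ∀ p ∈ Finset.range R', (-1:A) ^ (p+1) * (a * ezf l (((p:ℕ)+1:ℕ) - 1)) * hzf l (w - ((p:ℕ)+1:ℕ))
            = -(a * ((-1:A) ^ p * ezf l p * hzf l (w - 1 - p))) := by
          intro p _
          have e1 : (((p:ℕ)+1:ℕ) : ℤ) - 1 = (p : ℤ) := by push_cast; ring
          have e2 : w - (((p:ℕ)+1:ℕ) : ℤ) = w - 1 - p := by push_cast; ring
          rw [e1, e2, pow_succ]
          ring
        rw [Finset.sum_congr rfl this, Finset.sum_neg_distrib, ← Finset.mul_sum,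
          ih hl' (w - 1)]
        ring
      -- induction on z
      rcases lt_or_ge z 0 with hz | hz
      · rw [hzf_nil, if_neg (by omega)]
        refine Finset.sum_eq_zero fun p _ => ?_
        rw [hzf_neg _ (by omega), mul_zero]
      · obtain ⟨j, rfl⟩ : ∃ j : ℕ, z = (j : ℤ) := ⟨z.toNat, by omega⟩
        clear hz
        induction j with
        | zero =>
            simp only [Nat.cast_zero]
            rw [hrec 0]
            have : ∑ p ∈ Finset.range (R' + 1),
                (-1 : A) ^ p * ezf (a :: l) p * hzf (a :: l) ((0:ℤ) - 1 - p) = 0 :=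
              Finset.sum_eq_zero fun p _ => by rw [hzf_neg _ (by omega), mul_zero]
            rw [this, hzf_nil, hzf_nil]
            norm_num
        | succ j ihj =>
            push_cast
            rw [hrec ((j:ℤ)+1)]
            have e1 : ((j:ℤ) + 1) - 1 = (j : ℤ) := by ring
            rw [e1, ihj]
            simp only [hzf_nil]
            ring

end Generic2

section Generic3

variable {A : Type*} [CommRing A]

lemma key_conv (Z L : List A) {R : ℕ} (hR : L.length < R) (z : ℤ) :
    ∑ p ∈ Finset.range R, (-1 : A) ^ p * ezf L p * hzf (L ++ Z) (z - p) = hzf Z z := by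
  rcases lt_or_ge z 0 with hz | hz
  · rw [hzf_neg _ hz]
    refine Finset.sum_eq_zero fun p _ => ?_
    rw [hzf_neg _ (by omega), mul_zero]
  · set R' : ℕ := z.toNat + 1 with hR'
    have e1 : ∀ p ∈ Finset.range R, (-1:A) ^ p * ezf L p * hzf (L ++ Z) (z - p)
        = ∑ q ∈ Finset.range R', ((-1:A) ^ p * ezf L p * hzf L ((z - q) - p)) * hzf Z q := by
      intro p _
      rw [hzf_append L Z (show z - (p:ℤ) < R' by omega), Finset.mul_sum]
      refine Finset.sum_congr rfl fun q _ => ?_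
      have : z - (p:ℤ) - q = z - q - p := by ring
      rw [this]; ring
    rw [Finset.sum_congr rfl e1, Finset.sum_comm]
    have e2 : ∀ q ∈ Finset.range R',
        (∑ p ∈ Finset.range R, ((-1:A) ^ p * ezf L p * hzf L ((z - q) - p)) * hzf Z q)
        = hzf ([] : List A) (z - q) * hzf Z q := by
      intro q _
      rw [← Finset.sum_mul, cancel_sum L hR (z - q)]
    rw [Finset.sum_congr rfl e2]
    have := hzf_append ([] : List A) Z (show z < R' by omega)
    simpa using this.symm

lemma prod_lemma (L : List A) (x : A) :
    (L.map (fun c => x - c)).prod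
      = ∑ p ∈ Finset.range (L.length + 1), (-1 : A) ^ p * ezf L p * x ^ (L.length - p) := by
  induction L with
  | nil => simp [ezf_zero]
  | cons a l ih =>
      simp only [List.map_cons, List.prod_cons, List.length_cons]
      rw [ih]
      have expand : ∀ p ∈ Finset.range (l.length + 1 + 1),
          (-1:A) ^ p * ezf (a :: l) p * x ^ (l.length + 1 - p)
          = (-1:A) ^ p * ezf l p * x ^ (l.length + 1 - p)
            + (-1:A) ^ p * (a * ezf l ((p:ℤ) - 1)) * x ^ (l.length + 1 - p) := by
        intro p _
        rw [ezf_cons a l (p:ℤ)]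
        ring
      rw [Finset.sum_congr rfl expand, Finset.sum_add_distrib]
      have piece1 : ∑ p ∈ Finset.range (l.length + 1 + 1),
          (-1:A) ^ p * ezf l p * x ^ (l.length + 1 - p)
          = x * ∑ p ∈ Finset.range (l.length + 1), (-1:A) ^ p * ezf l p * x ^ (l.length - p) := by
        rw [Finset.sum_range_succ,
          ezf_of_length_lt l (show ((l.length:ℤ)) < ((l.length + 1 : ℕ) : ℤ) by push_cast; omega),
          mul_zero, zero_mul, add_zero, Finset.mul_sum]
        refine Finset.sum_congr rfl fun p hp => ?_
        have hp' : p ≤ l.length := by simp at hp; omega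
        have he : l.length + 1 - p = (l.length - p) + 1 := by omega
        rw [he, pow_succ]
        ring
      have piece2 : ∑ p ∈ Finset.range (l.length + 1 + 1),
          (-1:A) ^ p * (a * ezf l ((p:ℤ) - 1)) * x ^ (l.length + 1 - p)
          = -(a * ∑ p ∈ Finset.range (l.length + 1),
              (-1:A) ^ p * ezf l p * x ^ (l.length - p)) := by
        rw [Finset.sum_range_succ'
          (fun p => (-1:A) ^ p * (a * ezf l ((p:ℤ) - 1)) * x ^ (l.length + 1 - p)) (l.length + 1)]
        have h0 : (-1:A) ^ 0 * (a * ezf l (((0:ℕ):ℤ) - 1)) * x ^ (l.length + 1 - 0) = 0 := by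
          rw [ezf_neg l (by norm_num : ((0:ℕ):ℤ) - 1 < 0)]
          ring
        rw [h0, add_zero]
        have step : ∀ p ∈ Finset.range (l.length + 1),
            (-1:A) ^ (p+1) * (a * ezf l ((((p+1:ℕ)):ℤ) - 1)) * x ^ (l.length + 1 - (p+1))
            = -(a * ((-1:A) ^ p * ezf l p * x ^ (l.length - p))) := by
          intro p _
          have e1 : (((p+1:ℕ)):ℤ) - 1 = (p:ℤ) := by push_cast; ring
          have e2 : l.length + 1 - (p+1) = l.length - p := by omega
          rw [e1, e2, pow_succ]
          ring
        rw [Finset.sum_congr rfl step, Finset.sum_neg_distrib, ← Finset.mul_sum]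
      rw [piece1, piece2]
      ring

end Generic3

section Applied

lemma SJ_nil {A : Type*} [CommRing A] (P : List A) (j : ℤ) : SJ P [] j = hzf P j := by
  unfold SJ hzf
  split_ifs with h
  · rw [Finset.sum_eq_single 0]
    · rw [efun_zero]; simp
    · intro p _ hp
      obtain ⟨q, rfl⟩ := Nat.exists_eq_succ_of_ne_zero hp
      have : efun ([] : List A) (q + 1) = 0 := by simp [efun]
      rw [this, mul_zero]
    · intro h0; exact absurd (Finset.mem_range.2 (by omega)) h0
  · rfl

lemma XL_length (N a b : ℕ) : (XL N a b).length = b + 1 - a := by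
  simp [XL]

lemma list_prod_range' {A : Type*} [CommMonoid A] (h : ℕ → A) (s c : ℕ) :
    ((List.range' s c).map h).prod = ∏ i ∈ Finset.Ico s (s + c), h i := by
  induction c generalizing s with
  | zero => simp
  | succ c ih =>
      rw [List.range'_succ, List.map_cons, List.prod_cons, ih (s + 1),
        Finset.prod_eq_prod_Ico_succ_bot (by omega : s < s + (c + 1)) h,
        show s + 1 + c = s + c + 1 by omega, show s + (c + 1) = s + c + 1 by omega]

variable (n m : ℕ)

/-- The list `x_1, …, x_n` with `x_k` removed. -/
def remLst (k : ℕ) : List (Kg (n + m)) := XL (n + m) 1 (k - 1) ++ XL (n + m) (k + 1) n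

lemma remLst_length {k : ℕ} (h1 : 1 ≤ k) (h2 : k ≤ n) : (remLst n m k).length = n - 1 := by
  simp only [remLst, List.length_append, XL_length]
  omega

lemma XL_decomp {k : ℕ} (h1 : 1 ≤ k) (h2 : k ≤ n) :
    XL (n + m) 1 n = XL (n + m) 1 (k - 1) ++ xv (n + m) k :: XL (n + m) (k + 1) n := by
  unfold XL
  rw [← List.map_cons, ← List.map_append]
  congr 1
  have e1 : n + 1 - (k + 1) = n - k := by omega
  have e2 : k + 1 - 1 = k := by omega
  have e3 : k - 1 + 1 - 1 = k - 1 := by omega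
  have e4 : n + 1 - 1 = n := by omega
  rw [e1, e3, e4, ← List.range'_succ (s := k) (n := n - k) (step := 1)]
  have := List.range'_append_1 (s := 1) (m := k - 1) (n := n - k + 1)
  rw [show 1 + (k - 1) = k by omega] at this
  rw [this]
  congr 1
  omega

lemma perm_decomp {k : ℕ} (h1 : 1 ≤ k) (h2 : k ≤ n) :
    (XL (n + m) (n + 1) (n + m) ++ XL (n + m) 1 n).Perm
      (remLst n m k ++ (XL (n + m) (n + 1) (n + m) ++ [xv (n + m) k])) := by
  rw [XL_decomp n m h1 h2]
  refine Multiset.coe_eq_coe.1 ?_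
  simp only [remLst, ← Multiset.coe_add, ← Multiset.cons_coe, ← Multiset.singleton_add,
    Multiset.coe_nil, add_zero]
  abel

lemma entry_eq {k : ℕ} (h1 : 1 ≤ k) (h2 : k ≤ n) (w : ℤ) :
    hzf (XL (n + m) (n + 1) (n + m) ++ [xv (n + m) k]) w
      = ∑ p ∈ Finset.range n, (-1 : Kg (n + m)) ^ p * ezf (remLst n m k) p *
          hzf (XL (n + m) (n + 1) (n + m) ++ XL (n + m) 1 n) (w - p) := by
  have hl : (remLst n m k).length < n := by rw [remLst_length n m h1 h2]; omega
  rw [← key_conv (XL (n + m) (n + 1) (n + m) ++ [xv (n + m) k]) (remLst n m k) hl w]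
  refine Finset.sum_congr rfl fun p _ => ?_
  congr 1
  refine hzf_perm ?_ _
  exact (perm_decomp n m h1 h2).symm

lemma xv_ne (N : ℕ) {i j : ℕ} (hi : 1 ≤ i) (hij : i < j) (hjN : j ≤ N) :
    xv N i ≠ xv N j := by
  rw [xv, xv, dif_pos (⟨hi, by omega⟩ : 1 ≤ i ∧ i ≤ N), dif_pos (⟨by omega, hjN⟩ : 1 ≤ j ∧ j ≤ N)]
  intro h
  have hinj : Function.Injective (algebraMap (Rg N) (Kg N)) := IsFractionRing.injective _ _
  have h2 := MvPolynomial.X_injective (hinj h)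
  have h3 : i - 1 = j - 1 := congrArg Fin.val h2
  omega

/-- `Δ(X) = ∏_{i<j} (x_j - x_i)`. -/
def deltaP (N k : ℕ) : Kg N := ∏ i ∈ Finset.Icc 1 k, ∏ j ∈ Finset.Ioc i k, (xv N j - xv N i)

/-- `∏_{i<j} (x_i - x_j)`. -/
def deltaM (N k : ℕ) : Kg N := ∏ i ∈ Finset.Icc 1 k, ∏ j ∈ Finset.Ioc i k, (xv N i - xv N j)

lemma deltaM_ne_zero (N k : ℕ) (hk : k ≤ N) : deltaM N k ≠ 0 := by
  refine Finset.prod_ne_zero_iff.2 fun i hi => Finset.prod_ne_zero_iff.2 fun j hj => ?_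
  rw [Finset.mem_Icc] at hi
  rw [Finset.mem_Ioc] at hj
  exact sub_ne_zero_of_ne (xv_ne N hi.1 hj.1 (by omega))

lemma vand_prod_eq (N : ℕ) :
    (∏ a : Fin n, ∏ b ∈ Finset.Ioi a, (xv N (n - (b : ℕ)) - xv N (n - (a : ℕ))))
      = deltaM N n := by
  rcases Nat.eq_zero_or_pos n with hn | hn
  · subst hn
    simp [deltaM]
  · unfold deltaM
    rw [Finset.prod_sigma', Finset.prod_sigma']
    refine Finset.prod_nbij'
      (fun p => (⟨n - (p.2 : ℕ), n - (p.1 : ℕ)⟩ : (_ : ℕ) × ℕ))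
      (fun q => (⟨⟨(n - q.2) % n, Nat.mod_lt _ hn⟩, ⟨(n - q.1) % n, Nat.mod_lt _ hn⟩⟩ :
        (_ : Fin n) × Fin n))
      ?_ ?_ ?_ ?_ ?_
    · rintro ⟨a, b⟩ hp
      simp only [Finset.mem_sigma, Finset.mem_univ, Finset.mem_Ioi, true_and] at hp
      have ha := a.isLt
      have hb := b.isLt
      have hab : (a : ℕ) < (b : ℕ) := hp
      simp only [Finset.mem_sigma, Finset.mem_Icc, Finset.mem_Ioc]
      omega
    · rintro ⟨i, j⟩ hq
      simp only [Finset.mem_sigma, Finset.mem_Icc, Finset.mem_Ioc] at hq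
      simp only [Finset.mem_sigma, Finset.mem_univ, Finset.mem_Ioi, true_and]
      show ((n - j) % n) < ((n - i) % n)
      rw [Nat.mod_eq_of_lt (by omega), Nat.mod_eq_of_lt (by omega)]
      omega
    · rintro ⟨a, b⟩ hp
      simp only [Finset.mem_sigma, Finset.mem_univ, Finset.mem_Ioi, true_and] at hp
      have ha := a.isLt
      have hb := b.isLt
      have hab : (a : ℕ) < (b : ℕ) := hp
      refine Sigma.ext (Fin.ext ?_) (heq_of_eq (Fin.ext ?_))
      · show (n - (n - (a:ℕ))) % n = (a : ℕ)
        rw [Nat.mod_eq_of_lt (by omega)]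
        omega
      · show (n - (n - (b:ℕ))) % n = (b : ℕ)
        rw [Nat.mod_eq_of_lt (by omega)]
        omega
    · rintro ⟨i, j⟩ hq
      simp only [Finset.mem_sigma, Finset.mem_Icc, Finset.mem_Ioc] at hq
      refine Sigma.ext ?_ (heq_of_eq ?_)
      · show n - (((n - i) % n : ℕ)) = i
        rw [Nat.mod_eq_of_lt (by omega)]
        omega
      · show n - (((n - j) % n : ℕ)) = j
        rw [Nat.mod_eq_of_lt (by omega)]
        omega
    · rintro ⟨a, b⟩ _
      rfl

lemma outer_reindex (F : ℕ → Kg (n + m)) :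
    (∏ b : Fin n, F (n - (b : ℕ))) = ∏ k ∈ Finset.Icc 1 n, F k := by
  rw [Fin.prod_univ_eq_prod_range (fun b => F (n - b)) n]
  refine Finset.prod_nbij' (fun b => n - b) (fun k => n - k) ?_ ?_ ?_ ?_ ?_
  · intro b hb
    simp only [Finset.mem_range] at hb
    simp only [Finset.mem_Icc]
    omega
  · intro k hk
    simp only [Finset.mem_Icc] at hk
    simp only [Finset.mem_range]
    omega
  · intro b hb
    simp only [Finset.mem_range] at hb
    show n - (n - b) = b
    omega
  · intro k hk
    simp only [Finset.mem_Icc] at hk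
    show n - (n - k) = k
    omega
  · intro b _
    rfl

lemma inner_prod_eq {k : ℕ} (h1 : 1 ≤ k) (h2 : k ≤ n) :
    ((remLst n m k).map (fun c => xv (n + m) k - c)).prod
      = (∏ i ∈ Finset.Ico 1 k, (xv (n + m) k - xv (n + m) i)) *
        (∏ i ∈ Finset.Ioc k n, (xv (n + m) k - xv (n + m) i)) := by
  have hIoc : Finset.Ioc k n = Finset.Ico (k + 1) (n + 1) := by
    ext x; simp only [Finset.mem_Ioc, Finset.mem_Ico]; omega
  unfold remLst XL
  rw [List.map_append, List.prod_append, List.map_map, List.map_map,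
    list_prod_range' _ 1 (k - 1 + 1 - 1), list_prod_range' _ (k + 1) (n + 1 - (k + 1)),
    hIoc, show 1 + (k - 1 + 1 - 1) = k by omega,
    show k + 1 + (n + 1 - (k + 1)) = n + 1 by omega]
  exact congrArg₂ (· * ·) (Finset.prod_congr rfl fun i _ => rfl)
    (Finset.prod_congr rfl fun i _ => rfl)

lemma diag_prod_eq :
    (∏ b : Fin n, ((remLst n m (n - (b : ℕ))).map
        (fun c => xv (n + m) (n - (b : ℕ)) - c)).prod)
      = deltaP (n + m) n * deltaM (n + m) n := by
  rw [outer_reindex n m (fun k => ((remLst n m k).map (fun c => xv (n + m) k - c)).prod)]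
  have inner : ∀ k ∈ Finset.Icc 1 n,
      ((remLst n m k).map (fun c => xv (n + m) k - c)).prod
      = (∏ i ∈ Finset.Ico 1 k, (xv (n + m) k - xv (n + m) i)) *
        (∏ i ∈ Finset.Ioc k n, (xv (n + m) k - xv (n + m) i)) := by
    intro k hk
    rw [Finset.mem_Icc] at hk
    exact inner_prod_eq n m hk.1 hk.2
  rw [Finset.prod_congr rfl inner, Finset.prod_mul_distrib]
  congr 1
  · unfold deltaP
    refine Finset.prod_comm' fun x y => ?_
    simp only [Finset.mem_Icc, Finset.mem_Ico, Finset.mem_Ioc]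
    omega


end Applied

/-- formula A.13: `S_λ[Y+X]·Δ(X) = det(S_{α_i+n−1}[Y+x_{n+1−j}])`. -/
theorem stmt5 (n m : ℕ) (lam : Fin n → ℕ) (hlam : Antitone lam) :
    schurJT n lam (XL (n + m) (n + 1) (n + m) ++ XL (n + m) 1 n) [] *
        (∏ i ∈ Finset.Icc 1 n, ∏ j ∈ Finset.Ioc i n, (xv (n + m) j - xv (n + m) i))
      = (Matrix.of fun i j : Fin n =>
          SJ (XL (n + m) (n + 1) (n + m) ++ [xv (n + m) (n - (j : ℕ))]) []
            ((lam i : ℤ) - (i : ℕ) + (n : ℤ) - 1)).det := by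
  classical
  set K := Kg (n + m)
  set Y : List K := XL (n + m) (n + 1) (n + m) with hY
  set P : List K := Y ++ XL (n + m) 1 n with hP
  set Mm : Matrix (Fin n) (Fin n) K :=
    Matrix.of (fun i k : Fin n => hzf P ((lam i : ℤ) - (i : ℕ) + (k : ℕ))) with hMm
  set Em : Matrix (Fin n) (Fin n) K :=
    Matrix.of (fun k j : Fin n =>
      (-1 : K) ^ (n - 1 - (k : ℕ)) *
        ezf (remLst n m (n - (j : ℕ))) (((n - 1 - (k : ℕ) : ℕ)) : ℤ)) with hEm
  set Vm : Matrix (Fin n) (Fin n) K :=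
    Matrix.of (fun a k : Fin n => xv (n + m) (n - (a : ℕ)) ^ (k : ℕ)) with hVm
  -- Step 1: the Jacobi-Trudi determinant is `det Mm`.
  have h1 : schurJT n lam P [] = Mm.det := by
    unfold schurJT
    congr 1
    ext i k
    exact SJ_nil _ _
  -- Step 2: the RHS matrix is `Mm * Em`.
  have h2 : (Matrix.of fun i j : Fin n =>
        SJ (Y ++ [xv (n + m) (n - (j : ℕ))]) [] ((lam i : ℤ) - (i : ℕ) + (n : ℤ) - 1))
      = Mm * Em := by
    ext i j
    have hjn := j.isLt
    have hj1 : 1 ≤ n - (j : ℕ) := by omega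
    have hj2 : n - (j : ℕ) ≤ n := by omega
    rw [Matrix.mul_apply, Matrix.of_apply, SJ_nil,
      entry_eq n m hj1 hj2 ((lam i : ℤ) - (i : ℕ) + (n : ℤ) - 1),
      ← Finset.sum_range_reflect (fun p => (-1 : K) ^ p * ezf (remLst n m (n - (j : ℕ))) p *
        hzf P ((lam i : ℤ) - (i : ℕ) + (n : ℤ) - 1 - p)) n,
      Finset.sum_range]
    refine Finset.sum_congr rfl fun k _ => ?_
    have hkn := k.isLt
    have harg : (lam i : ℤ) - (i : ℕ) + (n : ℤ) - 1 - ((n - 1 - (k : ℕ) : ℕ) : ℤ)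
        = (lam i : ℤ) - (i : ℕ) + ((k : ℕ) : ℤ) := by omega
    simp only [hMm, hEm, Matrix.of_apply]
    rw [harg]
    ring
  -- Step 3: `Vm * Em` is diagonal.
  have h3 : Vm * Em = Matrix.diagonal (fun b : Fin n =>
      ((remLst n m (n - (b : ℕ))).map (fun c => xv (n + m) (n - (b : ℕ)) - c)).prod) := by
    ext a b
    have han := a.isLt
    have hbn := b.isLt
    have hb1 : 1 ≤ n - (b : ℕ) := by omega
    have hb2 : n - (b : ℕ) ≤ n := by omega
    have hlen : (remLst n m (n - (b : ℕ))).length = n - 1 := remLst_length n m hb1 hb2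
    have hsum : (Vm * Em) a b
        = ((remLst n m (n - (b : ℕ))).map (fun c => xv (n + m) (n - (a : ℕ)) - c)).prod := by
      rw [prod_lemma, hlen, show n - 1 + 1 = n by omega, Matrix.mul_apply,
        ← Finset.sum_range_reflect (fun p => (-1 : K) ^ p * ezf (remLst n m (n - (b : ℕ))) p *
          xv (n + m) (n - (a : ℕ)) ^ (n - 1 - p)) n,
        Finset.sum_range]
      refine Finset.sum_congr rfl fun k _ => ?_
      have hkn := k.isLt
      have he : n - 1 - (n - 1 - (k : ℕ)) = (k : ℕ) := by omega
      simp only [hVm, hEm, Matrix.of_apply]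
      rw [he]
      ring
    rcases eq_or_ne a b with rfl | hab
    · rw [Matrix.diagonal_apply_eq]
      exact hsum
    · rw [Matrix.diagonal_apply_ne _ hab, hsum]
      apply List.prod_eq_zero
      refine List.mem_map.2 ⟨xv (n + m) (n - (a : ℕ)), ?_, sub_self _⟩
      have hne : n - (a : ℕ) ≠ n - (b : ℕ) := by
        intro h
        exact hab (Fin.ext (by omega))
      unfold remLst XL
      rw [List.mem_append]
      rcases lt_or_gt_of_ne hne with hlt | hgt
      · left
        exact List.mem_map.2 ⟨n - (a : ℕ), List.mem_range'_1.2 ⟨by omega, by omega⟩, rfl⟩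
      · right
        exact List.mem_map.2 ⟨n - (a : ℕ), List.mem_range'_1.2 ⟨by omega, by omega⟩, rfl⟩
  -- Step 4: determinant of `Vm`.
  have hVdet : Vm.det = deltaM (n + m) n := by
    have hv : Vm = Matrix.vandermonde (fun a : Fin n => xv (n + m) (n - (a : ℕ))) := rfl
    rw [hv, Matrix.det_vandermonde]
    exact vand_prod_eq n (n + m)
  -- Step 5: determinant of `Em`.
  have hEdet : Em.det = deltaP (n + m) n := by
    have hne := deltaM_ne_zero (n + m) n (by omega)
    refine mul_left_cancel₀ hne ?_
    calc deltaM (n + m) n * Em.det = Vm.det * Em.det := by rw [hVdet]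
      _ = (Vm * Em).det := (Matrix.det_mul _ _).symm
      _ = deltaP (n + m) n * deltaM (n + m) n := by
          rw [h3, Matrix.det_diagonal]
          exact diag_prod_eq n m
      _ = deltaM (n + m) n * deltaP (n + m) n := mul_comm _ _
  -- Conclusion.
  show schurJT n lam P [] * deltaP (n + m) n
      = (Matrix.of fun i j : Fin n =>
          SJ (Y ++ [xv (n + m) (n - (j : ℕ))]) [] ((lam i : ℤ) - (i : ℕ) + (n : ℤ) - 1)).det
  rw [h2, Matrix.det_mul, hEdet, h1]

end
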